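/- arXiv:2603.07284 — 6 statements merged into one kernel-verified Lean document; each statement's English description precedes it below -/
import Mathlib

section
/- For every n ≥ 1, the number of derangements satisfies d_n = ∑_{k=1}^{n} (k−1) · C(n,k) · d_{n−k}. -/
open Finset

/-- `p n k` : number of permutations of `{1,...,n}` with exactly `k` fixed points. -/
def p (n k : ℕ) : ℕ :=
  Fintype.card {σ : Equiv.Perm (Fin n) // (Finset.univ.filter fun x => σ x = x).card = k}

lemma fiber_card (n : ℕ) (s : Finset (Fin n)) :
    (univ.filter (fun σ : Equiv.Perm (Fin n) => univ.filter (fun x => σ x = x) = s)).card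
      = numDerangements (n - s.card) := by
  rw [← Fintype.card_subtype]
  have e1 : {σ : Equiv.Perm (Fin n) // univ.filter (fun x => σ x = x) = s}
      ≃ { f : Equiv.Perm (Fin n) // ∀ a, ¬(a ∉ s) ↔ a ∈ Function.fixedPoints f } := by
    apply Equiv.subtypeEquivRight
    intro f
    simp only [Finset.ext_iff, mem_filter, mem_univ, true_and, Function.mem_fixedPoints,
      Function.IsFixedPt, not_not]
    exact forall_congr' fun a => Iff.comm
  have e2 := (derangements.subtypeEquiv (fun a : Fin n => a ∉ s)).symm
  have hcard : Fintype.card {a : Fin n // a ∉ s} = n - s.card := by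
    simp [Fintype.card_subtype, Finset.filter_not, Finset.card_sdiff_of_subset (Finset.subset_univ s)]
  rw [Fintype.card_congr (e1.trans e2), card_derangements_eq_numDerangements, hcard]

lemma filter_card_le (n : ℕ) (σ : Equiv.Perm (Fin n)) :
    (univ.filter (fun x => σ x = x)).card ≤ n :=
  le_trans (Finset.card_filter_le _ _) (by simp)

lemma p_eq (n k : ℕ) : p n k = n.choose k * numDerangements (n - k) := by
  rcases le_or_gt k n with hk | hk
  · rw [p, Fintype.card_subtype]
    have key := Finset.card_eq_sum_card_fiberwise
      (s := univ.filter (fun σ : Equiv.Perm (Fin n) =>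
        (univ.filter (fun x => σ x = x)).card = k))
      (t := Finset.powersetCard k univ)
      (f := fun σ => univ.filter (fun x => σ x = x))
      (by intro σ hσ
          simp only [Finset.mem_coe, mem_filter, mem_univ, true_and] at hσ
          simp [Finset.mem_powersetCard, hσ])
    rw [key]
    have step : ∀ s ∈ Finset.powersetCard k (univ : Finset (Fin n)),
        ((univ.filter (fun σ : Equiv.Perm (Fin n) =>
          (univ.filter (fun x => σ x = x)).card = k)).filter
          (fun σ => univ.filter (fun x => σ x = x) = s)).card
        = numDerangements (n - k) := by
      intro s hs
      rw [Finset.mem_powersetCard] at hs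
      have : ((univ.filter (fun σ : Equiv.Perm (Fin n) =>
          (univ.filter (fun x => σ x = x)).card = k)).filter
          (fun σ => univ.filter (fun x => σ x = x) = s))
          = univ.filter (fun σ : Equiv.Perm (Fin n) => univ.filter (fun x => σ x = x) = s) := by
        rw [Finset.filter_filter]
        apply Finset.filter_congr
        intro σ _
        constructor
        · exact fun h => h.2
        · intro h; exact ⟨by rw [h, hs.2], h⟩
      rw [this, fiber_card, hs.2]
    rw [Finset.sum_congr rfl step, Finset.sum_const, Finset.card_powersetCard, Finset.card_univ,
      Fintype.card_fin, smul_eq_mul]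
  · rw [Nat.choose_eq_zero_of_lt hk, zero_mul, p, Fintype.card_eq_zero_iff]
    constructor
    rintro ⟨σ, hσ⟩
    have := filter_card_le n σ
    omega

lemma sum_p (n : ℕ) : ∑ k ∈ Finset.range (n + 1), n.choose k * numDerangements (n - k)
    = n.factorial := by
  have key := Finset.card_eq_sum_card_fiberwise
    (s := (univ : Finset (Equiv.Perm (Fin n))))
    (t := Finset.range (n + 1))
    (f := fun σ => (univ.filter (fun x => σ x = x)).card)
    (by intro σ _
        have := filter_card_le n σ
        simp [Nat.lt_succ_iff, this])
  have hcard : (univ : Finset (Equiv.Perm (Fin n))).card = n.factorial := by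
    simp [Finset.card_univ, Fintype.card_perm, Fintype.card_fin]
  rw [hcard] at key
  rw [key]
  refine Finset.sum_congr rfl fun k _ => ?_
  rw [← p_eq, p, Fintype.card_subtype]

theorem stmt3 (n : ℕ) (hn : 1 ≤ n) :
    p n 0 = ∑ k ∈ Finset.Icc 1 n, (k - 1) * n.choose k * p (n - k) 0 := by
  obtain ⟨m, rfl⟩ : ∃ m, n = m + 1 := ⟨n - 1, by omega⟩
  set n := m + 1 with hn'
  have hp0 : ∀ j : ℕ, p j 0 = numDerangements j := by
    intro j; rw [p_eq]; simp
  simp only [hp0]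
  set S1 := ∑ k ∈ Finset.Icc 1 n, (k - 1) * n.choose k * numDerangements (n - k) with hS1
  set S2 := ∑ k ∈ Finset.Icc 1 n, n.choose k * numDerangements (n - k) with hS2
  set S3 := ∑ k ∈ Finset.Icc 1 n, k * (n.choose k * numDerangements (n - k)) with hS3
  have h12 : S1 + S2 = S3 := by
    rw [hS1, hS2, hS3, ← Finset.sum_add_distrib]
    apply Finset.sum_congr rfl
    intro k hk
    rw [Finset.mem_Icc] at hk
    have : (k - 1) * n.choose k * numDerangements (n - k)
        + n.choose k * numDerangements (n - k)
        = ((k - 1) + 1) * (n.choose k * numDerangements (n - k)) := by ring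
    rw [this, Nat.sub_add_cancel hk.1]
  have hIcc : ∀ f : ℕ → ℕ, ∑ k ∈ Finset.Icc 1 n, f k = ∑ i ∈ Finset.range n, f (i + 1) := by
    intro f
    rw [← Finset.Ico_add_one_right_eq_Icc, Finset.sum_Ico_eq_sum_range]
    simp only [hn', Nat.add_sub_cancel]
    exact Finset.sum_congr rfl fun i _ => by rw [Nat.add_comm]
  have h2 : numDerangements n + S2 = n.factorial := by
    have hs := sum_p n
    rw [Finset.sum_range_succ'] at hs
    simp only [Nat.choose_zero_right, Nat.sub_zero, one_mul] at hs
    rw [hS2, hIcc]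
    omega
  have h3 : S3 = n.factorial := by
    rw [hS3, hIcc]
    have : ∀ i ∈ Finset.range n, (i + 1) * (n.choose (i + 1) * numDerangements (n - (i + 1)))
        = (m + 1) * (m.choose i * numDerangements (m - i)) := by
      intro i _
      have h := Nat.add_one_mul_choose_eq m i
      have hsub : n - (i + 1) = m - i := by omega
      rw [hsub, ← mul_assoc, mul_comm (i + 1), hn', ← h, mul_assoc]
    rw [Finset.sum_congr rfl this, ← Finset.mul_sum]
    have : n = m + 1 := hn'
    rw [this] at *
    rw [sum_p m]
    rw [Nat.factorial_succ]
  omega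
end

section
/- For all natural numbers q and n with n ≥ q, the Bell number satisfies n! · B_q = ∑_{j=0}^{n} j^q · p_n(j). -/
/-- Bell number: number of partitions of a set with `q` elements. -/
def Bell (q : ℕ) : ℕ := Fintype.card (Finpartition (Finset.univ : Finset (Fin q)))

open Finset

section Aux

variable {q n : ℕ}

instance kerDecidable (f : Fin q → Fin n) : DecidableRel ⇑(Setoid.ker f) :=
  fun a b => decidable_of_iff (f a = f b) Iff.rfl

/-- Kernel partition of a function. -/
def ker (f : Fin q → Fin n) : Finpartition (Finset.univ : Finset (Fin q)) :=
  Finpartition.ofSetoid (Setoid.ker f)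

lemma mem_ker_part {f : Fin q → Fin n} {a b : Fin q} :
    b ∈ (ker f).part a ↔ f a = f b := by
  rw [ker, Finpartition.mem_part_ofSetoid_iff_rel]
  exact Iff.rfl

lemma parts_eq_image_part {α : Type*} [DecidableEq α] [Fintype α]
    (P : Finpartition (Finset.univ : Finset α)) :
    P.parts = Finset.univ.image P.part := by
  ext t
  simp only [Finset.mem_image]
  constructor
  · intro ht
    obtain ⟨a, _, ha⟩ := P.part_surjOn ht
    exact ⟨a, Finset.mem_univ a, ha⟩
  · rintro ⟨a, -, rfl⟩
    exact P.part_mem.2 (Finset.mem_univ a)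

lemma ker_eq_iff {f : Fin q → Fin n} {P : Finpartition (Finset.univ : Finset (Fin q))} :
    ker f = P ↔ ∀ a b, f a = f b ↔ P.part a = P.part b := by
  constructor
  · rintro rfl a b
    rw [← mem_ker_part,
      (ker f).mem_part_iff_part_eq_part (Finset.mem_univ b) (Finset.mem_univ a), eq_comm]
  · intro h
    apply Finpartition.ext
    have hpart : ∀ a, (ker f).part a = P.part a := by
      intro a
      ext b
      rw [mem_ker_part, h a b,
        P.mem_part_iff_part_eq_part (Finset.mem_univ b) (Finset.mem_univ a), eq_comm]
    rw [parts_eq_image_part (ker f), parts_eq_image_part P]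
    exact Finset.image_congr fun a _ => hpart a

lemma image_card_of_ker {f : Fin q → Fin n} {P : Finpartition (Finset.univ : Finset (Fin q))}
    (h : ∀ a b, f a = f b ↔ P.part a = P.part b) :
    (Finset.univ.image f).card = P.parts.card := by
  refine Finset.card_bij' (fun y hy => P.part (Finset.mem_image.1 hy).choose)
    (fun t ht => f (P.nonempty_of_mem_parts ht).choose)
    (fun y hy => P.part_mem.2 (Finset.mem_univ _))
    (fun t ht => Finset.mem_image_of_mem f (Finset.mem_univ _)) ?_ ?_
  · intro y hy
    obtain ⟨-, ha⟩ := (Finset.mem_image.1 hy).choose_spec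
    set a := (Finset.mem_image.1 hy).choose with ha'
    have hcmem :=
      (P.nonempty_of_mem_parts (P.part_mem.2 (Finset.mem_univ a))).choose_spec
    have hpc := P.part_eq_of_mem (P.part_mem.2 (Finset.mem_univ a)) hcmem
    exact ((h a _).2 hpc.symm).symm.trans ha
  · intro t ht
    have hcmem := (P.nonempty_of_mem_parts ht).choose_spec
    set c := (P.nonempty_of_mem_parts ht).choose with hc'
    obtain ⟨-, ha⟩ :=
      (Finset.mem_image.1 (Finset.mem_image_of_mem f (Finset.mem_univ c))).choose_spec
    exact ((h _ _).1 ha).trans (P.part_eq_of_mem ht hcmem)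

lemma fiber_card_s8 (P : Finpartition (Finset.univ : Finset (Fin q)))
    [DecidablePred fun f : Fin q → Fin n => ker f = P] :
    (Finset.univ.filter fun f : Fin q → Fin n => ker f = P).card
      = Fintype.card (↥P.parts ↪ Fin n) := by
  rw [← Finset.card_univ]
  refine Finset.card_bij'
    (fun f hf =>
      (⟨fun t => f (P.nonempty_of_mem_parts t.2).choose, ?_⟩ : ↥P.parts ↪ Fin n))
    (fun g _ => fun x => g ⟨P.part x, P.part_mem.2 (Finset.mem_univ x)⟩)
    (fun f hf => Finset.mem_univ _) ?_ ?_ ?_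
  · intro t u htu
    have hff := ker_eq_iff.1 (Finset.mem_filter.1 hf).2
    have h1 : P.part (P.nonempty_of_mem_parts t.2).choose = t.1 :=
      P.part_eq_of_mem t.2 (P.nonempty_of_mem_parts t.2).choose_spec
    have h2 : P.part (P.nonempty_of_mem_parts u.2).choose = u.1 :=
      P.part_eq_of_mem u.2 (P.nonempty_of_mem_parts u.2).choose_spec
    have := (hff _ _).1 htu
    exact Subtype.ext (h1 ▸ h2 ▸ this)
  · intro g hg
    refine Finset.mem_filter.2 ⟨Finset.mem_univ _, ker_eq_iff.2 fun a b => ?_⟩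
    rw [g.injective.eq_iff, Subtype.mk.injEq]
  · intro f hf
    funext x
    show f _ = f x
    have hff := ker_eq_iff.1 (Finset.mem_filter.1 hf).2
    have hcmem : (P.nonempty_of_mem_parts (P.part_mem.2 (Finset.mem_univ x))).choose ∈ P.part x :=
      (P.nonempty_of_mem_parts (P.part_mem.2 (Finset.mem_univ x))).choose_spec
    have hpc := P.part_eq_of_mem (P.part_mem.2 (Finset.mem_univ x)) hcmem
    exact (hff _ _).2 hpc
  · intro g hg
    ext t
    have h1 : (⟨P.part ((P.nonempty_of_mem_parts t.2).choose),
        P.part_mem.2 (Finset.mem_univ _)⟩ : ↥P.parts) = t :=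
      Subtype.ext (P.part_eq_of_mem t.2 (P.nonempty_of_mem_parts t.2).choose_spec)
    simp only [Function.Embedding.coeFn_mk]
    exact congrArg (fun s => ((g s : Fin n) : ℕ)) h1

end Aux

theorem stmt8 (q n : ℕ) (h : q ≤ n) :
    n.factorial * Bell q = ∑ j ∈ Finset.range (n + 1), j ^ q * p n j := by
  classical
  have hp : ∀ j, p n j = (Finset.univ.filter
      fun σ : Equiv.Perm (Fin n) => (Finset.univ.filter fun x => σ x = x).card = j).card := by
    intro j
    rw [p, Fintype.card_subtype]
  have step1 : ∑ j ∈ Finset.range (n + 1), j ^ q * p n j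
      = ∑ σ : Equiv.Perm (Fin n), (Finset.univ.filter fun x => σ x = x).card ^ q := by
    have hmem : ∀ σ : Equiv.Perm (Fin n), σ ∈ (Finset.univ : Finset (Equiv.Perm (Fin n))) →
        (Finset.univ.filter fun x => σ x = x).card ∈ Finset.range (n + 1) := by
      intro σ _
      exact Finset.mem_range.2 (Nat.lt_succ_of_le
        (by simpa using Finset.card_filter_le (Finset.univ : Finset (Fin n)) fun x => σ x = x))
    rw [← Finset.sum_fiberwise_of_maps_to hmem
      (fun σ : Equiv.Perm (Fin n) => (Finset.univ.filter fun x => σ x = x).card ^ q)]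
    refine Finset.sum_congr rfl fun j _ => ?_
    rw [hp, mul_comm, ← smul_eq_mul, ← Finset.sum_const]
    refine Finset.sum_congr rfl fun σ hσ => ?_
    rw [(Finset.mem_filter.1 hσ).2]
  have step2 : ∀ σ : Equiv.Perm (Fin n),
      (Finset.univ.filter fun x => σ x = x).card ^ q
        = (Finset.univ.filter fun f : Fin q → Fin n => ∀ i, σ (f i) = f i).card := by
    intro σ
    have : (Finset.univ.filter fun f : Fin q → Fin n => ∀ i, σ (f i) = f i)
        = Fintype.piFinset fun _ : Fin q => Finset.univ.filter fun x => σ x = x := by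
      ext f
      simp [Fintype.mem_piFinset]
    rw [this, Fintype.card_piFinset]
    simp
  have step3 : ∑ σ : Equiv.Perm (Fin n),
      (Finset.univ.filter fun f : Fin q → Fin n => ∀ i, σ (f i) = f i).card
      = ∑ f : Fin q → Fin n,
        (Finset.univ.filter fun σ : Equiv.Perm (Fin n) => ∀ i, σ (f i) = f i).card := by
    simp only [Finset.card_filter]
    exact Finset.sum_comm
  have step4 : ∀ f : Fin q → Fin n,
      (Finset.univ.filter fun σ : Equiv.Perm (Fin n) => ∀ i, σ (f i) = f i).card
        = (n - (Finset.univ.image f).card).factorial := by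
    intro f
    have hiff : ∀ σ : Equiv.Perm (Fin n),
        (∀ i, σ (f i) = f i) ↔ ∀ x : Fin n, ¬ (x ∉ Finset.univ.image f) → σ x = x := by
      intro σ
      constructor
      · intro hσ x hx
        rw [not_not] at hx
        obtain ⟨i, -, rfl⟩ := Finset.mem_image.1 hx
        exact hσ i
      · intro hσ i
        exact hσ (f i) (not_not.2 (Finset.mem_image_of_mem f (Finset.mem_univ i)))
    rw [Finset.filter_congr fun σ _ => hiff σ]
    rw [← Fintype.card_subtype]
    rw [← Fintype.card_congr (Equiv.Perm.subtypeEquivSubtypePerm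
      (fun x : Fin n => x ∉ Finset.univ.image f))]
    rw [Fintype.card_perm]
    congr 1
    rw [Fintype.card_subtype]
    rw [Finset.filter_not]
    rw [Finset.card_sdiff_of_subset (Finset.filter_subset _ _)]
    congr 1
    · simp
    · congr 1
      ext x
      simp
  have step5 : ∑ f : Fin q → Fin n, (n - (Finset.univ.image f).card).factorial
      = n.factorial * Bell q := by
    rw [← Finset.sum_fiberwise_of_maps_to (g := fun f : Fin q → Fin n => ker f)
      (fun f _ => Finset.mem_univ (ker f))
      (fun f : Fin q → Fin n => (n - (Finset.univ.image f).card).factorial)]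
    have key : ∀ P : Finpartition (Finset.univ : Finset (Fin q)),
        ∑ f ∈ Finset.univ.filter (fun f : Fin q → Fin n => ker f = P),
          (n - (Finset.univ.image f).card).factorial = n.factorial := by
      intro P
      have hk : P.parts.card ≤ n := le_trans (le_trans P.card_parts_le_card (by simp)) h
      have hc : ∀ f ∈ Finset.univ.filter (fun f : Fin q → Fin n => ker f = P),
          (n - (Finset.univ.image f).card).factorial = (n - P.parts.card).factorial := by
        intro f hf
        rw [image_card_of_ker (ker_eq_iff.1 (Finset.mem_filter.1 hf).2)]
      rw [Finset.sum_congr rfl hc, Finset.sum_const, smul_eq_mul, fiber_card_s8 P,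
        Fintype.card_embedding_eq, Fintype.card_coe, Fintype.card_fin, mul_comm]
      exact Nat.factorial_mul_descFactorial hk
    rw [Finset.sum_congr rfl fun P _ => key P, Finset.sum_const, smul_eq_mul]
    rw [Finset.card_univ, Bell, mul_comm]
  rw [step1, Finset.sum_congr rfl fun σ _ => step2 σ, step3,
    Finset.sum_congr rfl fun f _ => step4 f, step5]
end

section
/- For every n ≥ 0, the polynomial identity ∑_{k=0}^{n} t^k · p_n(k) = n! · ∑_{i=0}^{n} (t−1)^i / i! holds in ℚ[t]. -/
open Finset

open Equiv

-- count of permutations fixing S pointwise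
lemma card_fixing (n : ℕ) (S : Finset (Fin n)) :
    (Finset.univ.filter fun σ : Perm (Fin n) =>
        ∀ x ∈ S, σ x = x).card = (n - S.card).factorial := by
  classical
  rw [← Fintype.card_subtype]
  have e : {σ : Perm (Fin n) // ∀ x ∈ S, σ x = x} ≃ Perm {a : Fin n // a ∉ S} := by
    refine (Equiv.subtypeEquivRight ?_).trans (Perm.subtypeEquivSubtypePerm (fun a => a ∉ S)).symm
    intro f
    constructor
    · intro h a ha; exact h a (not_not.mp ha)
    · intro h a ha; exact h a (not_not.mpr ha)
  rw [Fintype.card_congr e, Fintype.card_perm]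
  congr 1
  rw [Fintype.card_subtype]
  simp [Finset.filter_not, Finset.card_sdiff_of_subset (Finset.subset_univ S), Finset.card_univ]

lemma sum_choose_fix (n i : ℕ) :
    (∑ σ : Perm (Fin n), ((Finset.univ.filter fun x => σ x = x).card.choose i))
      = n.choose i * (n - i).factorial := by
  classical
  have key : ∀ σ : Perm (Fin n),
      ((Finset.univ.filter fun x => σ x = x).card.choose i)
        = ((Finset.univ.powersetCard i).filter
            (fun S => S ⊆ Finset.univ.filter fun x => σ x = x)).card := by
    intro σ
    rw [← Finset.card_powersetCard]
    congr 1
    ext S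
    simp [Finset.mem_powersetCard, and_comm]
  simp_rw [key, Finset.card_filter]
  rw [Finset.sum_comm]
  have key2 : ∀ S ∈ Finset.univ.powersetCard i,
      (∑ σ : Perm (Fin n),
        if S ⊆ Finset.univ.filter fun x => σ x = x then 1 else 0) = (n - i).factorial := by
    intro S hS
    rw [Finset.mem_powersetCard_univ] at hS
    rw [← Finset.card_filter, ← hS, ← card_fixing n S]
    congr 1
    ext σ
    simp [Finset.subset_iff]
  rw [Finset.sum_congr rfl key2, Finset.sum_const, Finset.card_powersetCard,
    Finset.card_univ, Fintype.card_fin, smul_eq_mul]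

open Polynomial in
lemma lhs_eq (n : ℕ) :
    (∑ k ∈ Finset.range (n + 1), (p n k : ℚ[X]) * Polynomial.X ^ k)
      = ∑ σ : Perm (Fin n), (Polynomial.X : ℚ[X]) ^ (Finset.univ.filter fun x => σ x = x).card := by
  classical
  rw [← Finset.sum_fiberwise_of_maps_to (g := fun σ : Perm (Fin n) =>
      (Finset.univ.filter fun x => σ x = x).card) (fun σ _ => ?_)]
  · refine Finset.sum_congr rfl fun k _ => ?_
    rw [Finset.sum_congr rfl (fun σ hσ => by
      rw [(Finset.mem_filter.mp hσ).2]), Finset.sum_const, nsmul_eq_mul]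
    congr 1
    rw [p, Fintype.card_subtype]
  · rw [Finset.mem_range, Nat.lt_succ_iff]
    calc (Finset.univ.filter fun x => σ x = x).card ≤ Finset.univ.card :=
          Finset.card_le_card (Finset.filter_subset _ _)
      _ = n := by simp

open Polynomial in
lemma X_pow_expand (n m : ℕ) (hm : m ≤ n) :
    (Polynomial.X : ℚ[X]) ^ m
      = ∑ i ∈ Finset.range (n + 1), (m.choose i : ℚ[X]) * (Polynomial.X - 1) ^ i := by
  have h : (Polynomial.X : ℚ[X]) = (Polynomial.X - 1) + 1 := by ring
  rw [h, add_pow]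
  rw [Finset.sum_subset (Finset.range_subset_range.mpr (Nat.succ_le_succ hm))]
  · refine Finset.sum_congr rfl fun i _ => by ring_nf
  · intro i _ hi
    rw [Finset.mem_range, Nat.lt_succ_iff, not_le] at hi
    rw [Nat.choose_eq_zero_of_lt hi]
    simp

open Polynomial in
theorem stmt11 (n : ℕ) :
    (∑ k ∈ Finset.range (n + 1), (p n k : ℚ[X]) * Polynomial.X ^ k) =
      Polynomial.C (n.factorial : ℚ) *
        ∑ i ∈ Finset.range (n + 1),
          Polynomial.C ((i.factorial : ℚ))⁻¹ * (Polynomial.X - 1) ^ i := by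
  classical
  rw [lhs_eq]
  have hcard : ∀ σ : Perm (Fin n), (Finset.univ.filter fun x => σ x = x).card ≤ n := by
    intro σ
    calc (Finset.univ.filter fun x => σ x = x).card ≤ Finset.univ.card :=
          Finset.card_le_card (Finset.filter_subset _ _)
      _ = n := by simp
  rw [Finset.sum_congr rfl fun σ _ => X_pow_expand n _ (hcard σ), Finset.sum_comm,
    Finset.mul_sum]
  refine Finset.sum_congr rfl fun i hi => ?_
  rw [Finset.mem_range, Nat.lt_succ_iff] at hi
  rw [← Finset.sum_mul, ← mul_assoc]
  congr 1
  have : (∑ σ : Perm (Fin n), ((Finset.univ.filter fun x => σ x = x).card.choose i : ℚ[X]))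
      = ((n.choose i * (n - i).factorial : ℕ) : ℚ[X]) := by
    rw [← Nat.cast_sum]
    exact_mod_cast congrArg (Nat.cast : ℕ → ℚ[X]) (sum_choose_fix n i)
  rw [this]
  rw [← Polynomial.C_eq_natCast, ← Polynomial.C_mul]
  congr 1
  have h := Nat.choose_mul_factorial_mul_factorial hi
  have hfac : (i.factorial : ℚ) ≠ 0 := Nat.cast_ne_zero.mpr (Nat.factorial_ne_zero i)
  field_simp
  rw [← h]
  push_cast
  ring
end

section
/- For all integers n, r with 0 ≤ r ≤ n−2, ∑_{k=0}^{n} k(k−1)(k−2)⋯(k−r) · p_n(k) = n!, i.e., ∑_{k=0}^{n} (k)_{r+1} · p_n(k) = n!, where (k)_{r+1} is the falling factorial with r+1 factors. -/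
open Finset

/-- Swap the order of choosing a permutation and an ordered tuple of its fixed points. -/
def sigmaSwap (n m : ℕ) :
    (Σ σ : Equiv.Perm (Fin n), (Fin m ↪ {x : Fin n // σ x = x})) ≃
      (Σ f : Fin m ↪ Fin n, {σ : Equiv.Perm (Fin n) // ∀ i, σ (f i) = f i}) where
  toFun x := ⟨x.2.trans (Function.Embedding.subtype _), x.1, fun i => (x.2 i).2⟩
  invFun x := ⟨x.2.1, ⟨fun i => ⟨x.1 i, x.2.2 i⟩, fun i j hij =>
    x.1.injective (congrArg Subtype.val hij)⟩⟩
  left_inv := fun ⟨σ, e⟩ => rfl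
  right_inv := fun ⟨f, σ⟩ => rfl

lemma card_fixing_s12 (n m : ℕ) (f : Fin m ↪ Fin n) :
    Fintype.card {σ : Equiv.Perm (Fin n) // ∀ i, σ (f i) = f i} = (n - m).factorial := by
  classical
  have e1 : {σ : Equiv.Perm (Fin n) // ∀ i, σ (f i) = f i} ≃
      {σ : Equiv.Perm (Fin n) // ∀ a, ¬ (a ∉ Set.range f) → σ a = a} := by
    refine Equiv.subtypeEquivRight fun σ => ?_
    constructor
    · intro h a ha
      obtain ⟨i, rfl⟩ := not_not.mp ha
      exact h i
    · intro h i
      exact h (f i) (not_not.mpr ⟨i, rfl⟩)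
  have e2 := e1.trans (Equiv.Perm.subtypeEquivSubtypePerm
      (fun a : Fin n => a ∉ Set.range f)).symm
  rw [Fintype.card_congr e2, Fintype.card_perm, Fintype.card_subtype_compl]
  congr 2
  · exact Fintype.card_fin n
  · have e3 : {x : Fin n // x ∈ Set.range f} ≃ Fin m := (Equiv.ofInjective f f.injective).symm
    exact (Fintype.card_congr e3).trans (Fintype.card_fin m)

theorem stmt12 (n r : ℕ) (hr : r + 2 ≤ n) :
    ∑ k ∈ Finset.range (n + 1), k.descFactorial (r + 1) * p n k = n.factorial := by
  classical
  have h1 : ∑ k ∈ Finset.range (n + 1), k.descFactorial (r + 1) * p n k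
      = ∑ σ : Equiv.Perm (Fin n),
          ((Finset.univ.filter fun x => σ x = x).card).descFactorial (r + 1) := by
    rw [← Finset.sum_fiberwise_of_maps_to
      (g := fun σ : Equiv.Perm (Fin n) => (Finset.univ.filter fun x => σ x = x).card)
      (fun σ _ => Finset.mem_range.mpr (Nat.lt_succ_of_le (show (Finset.univ.filter fun x => σ x = x).card ≤ n from
        le_trans (Finset.card_filter_le _ _) (by simp))))
      (fun σ => ((Finset.univ.filter fun x => σ x = x).card).descFactorial (r + 1))]
    refine Finset.sum_congr rfl fun k _ => ?_
    rw [Finset.sum_congr rfl (fun σ hσ => by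
      rw [(Finset.mem_filter.mp hσ).2] :
      ∀ σ ∈ Finset.univ.filter fun σ : Equiv.Perm (Fin n) =>
        (Finset.univ.filter fun x => σ x = x).card = k, _ = k.descFactorial (r + 1))]
    rw [Finset.sum_const, smul_eq_mul, p, Fintype.card_subtype, mul_comm]
  have h2 : ∀ σ : Equiv.Perm (Fin n),
      ((Finset.univ.filter fun x => σ x = x).card).descFactorial (r + 1)
        = Fintype.card (Fin (r + 1) ↪ {x : Fin n // σ x = x}) := by
    intro σ
    rw [Fintype.card_embedding_eq, Fintype.card_fin, Fintype.card_subtype]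
  rw [h1, Finset.sum_congr rfl fun σ _ => h2 σ, ← Fintype.card_sigma,
    Fintype.card_congr (sigmaSwap n (r + 1)), Fintype.card_sigma]
  rw [Finset.sum_congr rfl fun f _ => card_fixing_s12 n (r + 1) f]
  rw [Finset.sum_const, smul_eq_mul, Finset.card_univ, Fintype.card_embedding_eq,
    Fintype.card_fin, Fintype.card_fin, mul_comm]
  exact Nat.factorial_mul_descFactorial (by omega)
end

section
/- For all positive integers k and all natural numbers i, k^i = ∑_{l=0}^{⌊(k−1)i/k⌋} (−1)^l · C(i,l) · C(k(i−l), i). -/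
open Polynomial Finset

theorem stmt17 (k i : ℕ) (hk : 0 < k) :
    (k : ℤ) ^ i = ∑ l ∈ Finset.range ((k - 1) * i / k + 1),
      (-1 : ℤ) ^ l * i.choose l * ((k * (i - l)).choose i) := by
  have hck : k.choose (k - 1) = k := by
    have h := Nat.choose_symm (Nat.sub_le k 1)
    rw [show k - (k - 1) = 1 by omega, Nat.choose_one_right] at h
    omega
  set P : ℤ[X] := (1 + X) ^ k - X ^ k with hP
  have hcoeff : ∀ m, P.coeff m = if m < k then (k.choose m : ℤ) else 0 := by
    intro m
    simp only [hP, coeff_sub, coeff_one_add_X_pow, coeff_X_pow]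
    rcases lt_trichotomy m k with h | h | h
    · simp [h, h.ne]
    · simp [h, Nat.choose_self]
    · simp [h.ne', not_lt.2 h.le, Nat.choose_eq_zero_of_lt h]
  have hdeg : P.natDegree = k - 1 := by
    apply le_antisymm
    · rw [natDegree_le_iff_coeff_eq_zero]
      intro m hm
      rw [hcoeff, if_neg (by omega)]
    · apply le_natDegree_of_ne_zero
      rw [hcoeff, if_pos (by omega), hck]
      exact_mod_cast hk.ne'
  have hlead : P.leadingCoeff = (k : ℤ) := by
    rw [Polynomial.leadingCoeff, hdeg, hcoeff, if_pos (by omega), hck]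
  -- LHS as a coefficient
  have h1 : (k : ℤ) ^ i = (P ^ i).coeff ((k - 1) * i) := by
    have hnd : (P ^ i).natDegree = i * (k - 1) := by
      rw [natDegree_pow, hdeg]
    rw [mul_comm, ← hnd, ← Polynomial.leadingCoeff, leadingCoeff_pow, hlead]
  -- coefficient via binomial expansion
  have h2 : (P ^ i).coeff ((k - 1) * i) = ∑ l ∈ range (i + 1),
      (-1 : ℤ) ^ l * i.choose l *
        (if k * l ≤ (k - 1) * i then ((k * (i - l)).choose ((k - 1) * i - k * l) : ℤ)
         else 0) := by
    have hPexp : P = -(X ^ k) + (1 + X) ^ k := by ring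
    rw [hPexp, add_pow, finset_sum_coeff]
    refine Finset.sum_congr rfl fun l _ => ?_
    have hterm : (-(X ^ k) : ℤ[X]) ^ l * ((1 + X) ^ k) ^ (i - l) * (i.choose l : ℤ[X])
        = C ((-1 : ℤ) ^ l * i.choose l) * ((1 + X) ^ (k * (i - l)) * X ^ (k * l)) := by
      rw [C_mul, C_pow, C_neg, C_1, C_eq_natCast]
      ring
    rw [hterm, coeff_C_mul, coeff_mul_X_pow']
    split_ifs with h
    · rw [coeff_one_add_X_pow]
    · ring
  -- relate the two sums
  have hN : (k - 1) * i / k ≤ i := by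
    calc (k - 1) * i / k ≤ k * i / k :=
          Nat.div_le_div_right (Nat.mul_le_mul_right i (by omega))
    _ = i := Nat.mul_div_cancel_left i hk
  have h3 : ∑ l ∈ range (i + 1),
      (-1 : ℤ) ^ l * i.choose l *
        (if k * l ≤ (k - 1) * i then ((k * (i - l)).choose ((k - 1) * i - k * l) : ℤ)
         else 0)
      = ∑ l ∈ Finset.range ((k - 1) * i / k + 1),
        (-1 : ℤ) ^ l * i.choose l * ((k * (i - l)).choose i) := by
    have hsub : range ((k - 1) * i / k + 1) ⊆ range (i + 1) :=
      Finset.range_subset_range.2 (by omega)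
    rw [← Finset.sum_subset hsub ?_]
    · refine Finset.sum_congr rfl fun l hl => ?_
      rw [Finset.mem_range] at hl
      have hl' : l ≤ (k - 1) * i / k := by omega
      have hkl : k * l ≤ (k - 1) * i := by
        rw [mul_comm]
        exact (Nat.le_div_iff_mul_le hk).1 hl'
      rw [if_pos hkl]
      congr 2
      rw [Nat.mul_sub, Nat.sub_one_mul] at *
      have hki : i ≤ k * i := Nat.le_mul_of_pos_left i hk
      generalize hA : k * i = A at *
      generalize hB : k * l = B at *
      have h1' : A - i - B = A - B - i := by omega
      have h2' : i ≤ A - B := by omega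
      rw [h1', Nat.choose_symm h2']
    · intro l hl hnl
      rw [Finset.mem_range] at hl hnl
      have : ¬ (k * l ≤ (k - 1) * i) := by
        intro h
        have hle : l ≤ (k - 1) * i / k :=
          (Nat.le_div_iff_mul_le hk).2 (by rwa [mul_comm l k])
        omega
      rw [if_neg this, mul_zero]
  rw [h1, h2, h3]
end

section
/- For every natural number i and every natural number k, k^i = ∑_{j=0}^{i} A(i,j) · C(k+j, i), where A(i,j) are the Eulerian numbers (Worpitzky's identity). -/
/-- Eulerian number `A i j`: number of permutations of `{1,...,i}` with exactly `j` ascents. -/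
def A (i j : ℕ) : ℕ :=
  Fintype.card {σ : Equiv.Perm (Fin i) //
    (Finset.univ.filter fun x : Fin i =>
      (x : ℕ) + 1 < i ∧ σ x < σ ⟨((x : ℕ) + 1) % i, Nat.mod_lt _ x.pos⟩).card = j}

namespace Worpitzky

open Finset

variable {i : ℕ}

/-- Ascent of `σ` at natural position `s`. -/
def IsAsc (σ : Equiv.Perm (Fin i)) (s : ℕ) : Prop :=
  ∃ h : s + 1 < i, σ ⟨s, Nat.lt_of_succ_lt h⟩ < σ ⟨s + 1, h⟩

instance (σ : Equiv.Perm (Fin i)) : DecidablePred (IsAsc σ) := fun _ =>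
  exists_prop_decidable _

/-- Number of ascents of `σ` at positions `< t`. -/
def aB (σ : Equiv.Perm (Fin i)) (t : ℕ) : ℕ := ((Finset.range t).filter (IsAsc σ)).card

lemma aB_mono (σ : Equiv.Perm (Fin i)) {t t' : ℕ} (h : t ≤ t') : aB σ t ≤ aB σ t' :=
  Finset.card_le_card (Finset.filter_subset_filter _ (Finset.range_subset_range.2 h))

lemma aB_le (σ : Equiv.Perm (Fin i)) (t : ℕ) : aB σ t ≤ t := by
  simpa [aB] using (Finset.card_filter_le (Finset.range t) (IsAsc σ))

lemma aB_succ (σ : Equiv.Perm (Fin i)) (t : ℕ) :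
    aB σ (t + 1) = aB σ t + (if IsAsc σ t then 1 else 0) := by
  rw [aB, aB, Finset.range_add_one, Finset.filter_insert]
  split_ifs with h
  · rw [Finset.card_insert_of_notMem (by simp)]
  · simp

lemma chain_lt {α : Type*} [Preorder α] {n : ℕ} (f : Fin n → α) :
    ∀ (b : ℕ) (hb : b < n) (a : ℕ) (hab : a < b)
      (h : ∀ (t : ℕ) (h1 : a ≤ t) (h2 : t + 1 ≤ b), f ⟨t, by omega⟩ < f ⟨t + 1, by omega⟩),
      f ⟨a, by omega⟩ < f ⟨b, hb⟩ := by
  intro b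
  induction b with
  | zero => omega
  | succ b ih =>
    intro hb a hab h
    rcases Nat.lt_or_ge a b with h' | h'
    · exact lt_trans (ih (by omega) a h' (fun t ht ht' => h t ht (by omega)))
        (h b (by omega) (by omega))
    · have : a = b := by omega
      subst this
      exact h a le_rfl (by omega)

lemma chain_le {α : Type*} [Preorder α] {n : ℕ} (f : Fin n → α)
    (h : ∀ (t : ℕ) (ht : t + 1 < n), f ⟨t, by omega⟩ ≤ f ⟨t + 1, by omega⟩) :
    ∀ (b : ℕ) (hb : b < n) (a : ℕ) (hab : a ≤ b), f ⟨a, by omega⟩ ≤ f ⟨b, hb⟩ := by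
  intro b
  induction b with
  | zero =>
    intro hb a hab
    have : a = 0 := by omega
    subst this; exact le_rfl
  | succ b ih =>
    intro hb a hab
    rcases Nat.lt_or_ge a (b + 1) with h' | h'
    · exact le_trans (ih (by omega) a (by omega)) (h b (by omega))
    · have : a = b + 1 := by omega
      subst this; exact le_rfl

lemma monotone_of_adjacent {α : Type*} [Preorder α] {n : ℕ} (f : Fin n → α)
    (h : ∀ (t : ℕ) (ht : t + 1 < n), f ⟨t, by omega⟩ ≤ f ⟨t + 1, by omega⟩) : Monotone f := by
  intro a b hab
  have := chain_le f h b.val b.isLt a.val (by exact hab)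
  simpa using this

lemma strictMono_of_adjacent {α : Type*} [Preorder α] {n : ℕ} (f : Fin n → α)
    (h : ∀ (t : ℕ) (ht : t + 1 < n), f ⟨t, by omega⟩ < f ⟨t + 1, by omega⟩) : StrictMono f := by
  intro a b hab
  have := chain_lt f b.val b.isLt a.val (by exact hab)
    (fun t ht ht' => h t (by omega))
  simpa using this

/-- The key predicate: `g` is monotone and strictly increasing at descents of `σ`. -/
def Good (σ : Equiv.Perm (Fin i)) {k : ℕ} (g : Fin i → Fin k) : Prop :=
  Monotone g ∧ ∀ (t : ℕ) (h : t + 1 < i), ¬ IsAsc σ t →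
    g ⟨t, Nat.lt_of_succ_lt h⟩ < g ⟨t + 1, h⟩

lemma sort_eq_iff_good {k : ℕ} (σ : Equiv.Perm (Fin i)) (f : Fin i → Fin k) :
    Tuple.sort f = σ ↔ Good σ (f ∘ ⇑σ) := by
  rw [eq_comm, Tuple.eq_sort_iff]
  constructor
  · rintro ⟨hm, hp⟩
    refine ⟨hm, fun t h hna => ?_⟩
    have hlt : (⟨t, Nat.lt_of_succ_lt h⟩ : Fin i) < ⟨t + 1, h⟩ := by
      simp [Fin.mk_lt_mk]
    rcases lt_or_eq_of_le (hm hlt.le) with h' | h'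
    · exact h'
    · exact absurd ⟨h, hp _ _ hlt h'⟩ hna
  · rintro ⟨hm, ha⟩
    refine ⟨hm, fun a b hab heq => ?_⟩
    have hba : (a : ℕ) < (b : ℕ) := hab
    have key : ∀ (t : ℕ) (h1 : (a : ℕ) ≤ t) (h2 : t + 1 ≤ (b : ℕ)),
        (⇑σ) ⟨t, by omega⟩ < (⇑σ) ⟨t + 1, by omega⟩ := by
      intro t ht ht'
      have hti : t + 1 < i := by have := b.isLt; omega
      set ta : Fin i := ⟨t, by omega⟩ with hta
      set tb : Fin i := ⟨t + 1, hti⟩ with htb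
      have l1 : (f ∘ ⇑σ) a ≤ (f ∘ ⇑σ) ta := hm (by rw [Fin.le_def]; exact ht)
      have l2 : (f ∘ ⇑σ) ta ≤ (f ∘ ⇑σ) tb := hm (by rw [Fin.le_def]; exact Nat.le_succ t)
      have l3 : (f ∘ ⇑σ) tb ≤ (f ∘ ⇑σ) b := hm (by rw [Fin.le_def]; exact ht')
      have heq' : (f ∘ ⇑σ) a = (f ∘ ⇑σ) b := heq
      have e : (f ∘ ⇑σ) ta = (f ∘ ⇑σ) tb :=
        le_antisymm l2 (by rw [← heq'] at l3; exact l3.trans l1)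
      by_cases hc : IsAsc σ t
      · obtain ⟨hc1, hc2⟩ := hc
        exact hc2
      · exact absurd e (ne_of_lt (ha t hti hc))
    have := chain_lt (⇑σ) b.val b.isLt a.val hba key
    simpa using this

/-- Fibers of `Tuple.sort` correspond to good sequences. -/
def e2 {k : ℕ} (σ : Equiv.Perm (Fin i)) :
    {f : Fin i → Fin k // Tuple.sort f = σ} ≃ {g : Fin i → Fin k // Good σ g} where
  toFun f := ⟨f.1 ∘ ⇑σ, (sort_eq_iff_good σ f.1).1 f.2⟩
  invFun g := ⟨g.1 ∘ ⇑σ.symm, by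
    rw [sort_eq_iff_good]
    have h : (g.1 ∘ ⇑σ.symm) ∘ ⇑σ = g.1 := by funext x; simp
    rw [h]; exact g.2⟩
  left_inv f := by
    apply Subtype.ext; funext x; simp
  right_inv g := by
    apply Subtype.ext; funext x; simp

lemma strictMono_le_self {n N : ℕ} (d : Fin n → Fin N) (hd : StrictMono d) :
    ∀ (t : ℕ) (ht : t < n), t ≤ (d ⟨t, ht⟩ : ℕ) := by
  intro t
  induction t with
  | zero => exact fun _ => Nat.zero_le _
  | succ t ih =>
    intro ht
    have h1 := ih (by omega)
    have h2 : d ⟨t, by omega⟩ < d ⟨t + 1, ht⟩ := hd (by simp [Fin.mk_lt_mk])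
    have h3 : (d ⟨t, by omega⟩ : ℕ) < (d ⟨t + 1, ht⟩ : ℕ) := h2
    omega

lemma d_bound (σ : Equiv.Perm (Fin i)) {k : ℕ} (d : Fin i → Fin (k + aB σ i))
    (hd : StrictMono d) :
    ∀ (m t : ℕ) (ht : t < i), t + m + 1 = i → (d ⟨t, ht⟩ : ℕ) < k + aB σ t := by
  intro m
  induction m with
  | zero =>
    intro t ht hti
    have h1 : (d ⟨t, ht⟩ : ℕ) < k + aB σ i := (d ⟨t, ht⟩).2
    have hi : i = t + 1 := by omega
    have h2 : aB σ (t + 1) = aB σ t := by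
      rw [aB_succ]
      have : ¬ IsAsc σ t := by
        rintro ⟨h, _⟩; omega
      simp [this]
    have h3 : aB σ i = aB σ (t + 1) := congrArg (aB σ) hi
    omega
  | succ m ih =>
    intro t ht hti
    have h2 := ih (t + 1) (by omega) (by omega)
    have h3 : d ⟨t, ht⟩ < d ⟨t + 1, by omega⟩ := hd (by simp [Fin.mk_lt_mk])
    have h3' : (d ⟨t, ht⟩ : ℕ) < (d ⟨t + 1, by omega⟩ : ℕ) := h3
    have h4 : aB σ (t + 1) ≤ aB σ t + 1 := by
      rw [aB_succ]; split <;> omega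
    omega

/-- Good sequences correspond to strictly monotone sequences. -/
def e3 {k : ℕ} (σ : Equiv.Perm (Fin i)) :
    {g : Fin i → Fin k // Good σ g} ≃
      {d : Fin i → Fin (k + aB σ i) // StrictMono d} where
  toFun g := ⟨fun t => ⟨(g.1 t : ℕ) + aB σ t.val, by
      have h1 : (g.1 t : ℕ) < k := (g.1 t).2
      have h2 : aB σ t.val ≤ aB σ i := aB_mono σ (le_of_lt t.2)
      omega⟩, by
    apply strictMono_of_adjacent
    intro t ht
    rw [Fin.mk_lt_mk]
    simp only []
    have hs := aB_succ σ t
    by_cases hc : IsAsc σ t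
    · have hmono : g.1 ⟨t, by omega⟩ ≤ g.1 ⟨t + 1, ht⟩ := g.2.1 (by simp [Fin.le_def])
      have : (g.1 ⟨t, by omega⟩ : ℕ) ≤ (g.1 ⟨t + 1, ht⟩ : ℕ) := hmono
      simp only [hc, if_true] at hs
      omega
    · have hlt : g.1 ⟨t, by omega⟩ < g.1 ⟨t + 1, ht⟩ := g.2.2 t ht hc
      have : (g.1 ⟨t, by omega⟩ : ℕ) < (g.1 ⟨t + 1, ht⟩ : ℕ) := hlt
      simp only [hc, if_false] at hs
      omega⟩
  invFun d := ⟨fun t => ⟨(d.1 t : ℕ) - aB σ t.val, by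
      have h1 := d_bound σ d.1 d.2 (i - 1 - t.val) t.val t.2 (by have := t.2; omega)
      have h2 : aB σ t.val ≤ t.val := aB_le σ t.val
      have h3 := strictMono_le_self d.1 d.2 t.val t.2
      simp only [Fin.eta] at h1 h3
      omega⟩, by
    constructor
    · apply monotone_of_adjacent
      intro t ht
      rw [Fin.le_def]
      simp only []
      have hs := aB_succ σ t
      have hlt : d.1 ⟨t, by omega⟩ < d.1 ⟨t + 1, ht⟩ := d.2 (by simp [Fin.mk_lt_mk])
      have hlt' : (d.1 ⟨t, by omega⟩ : ℕ) < (d.1 ⟨t + 1, ht⟩ : ℕ) := hlt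
      have h2 : aB σ t ≤ t := aB_le σ t
      have h3 := strictMono_le_self d.1 d.2 t (by omega)
      split at hs <;> omega
    · intro t ht hna
      rw [Fin.lt_def]
      simp only []
      have hs := aB_succ σ t
      simp only [hna, if_false] at hs
      have hlt : d.1 ⟨t, by omega⟩ < d.1 ⟨t + 1, ht⟩ := d.2 (by simp [Fin.mk_lt_mk])
      have hlt' : (d.1 ⟨t, by omega⟩ : ℕ) < (d.1 ⟨t + 1, ht⟩ : ℕ) := hlt
      have h2 : aB σ t ≤ t := aB_le σ t
      have h3 := strictMono_le_self d.1 d.2 t (by omega)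
      omega⟩
  left_inv g := by
    apply Subtype.ext; funext t; apply Fin.ext
    simp
  right_inv d := by
    apply Subtype.ext; funext t; apply Fin.ext
    have h2 : aB σ t.val ≤ t.val := aB_le σ t.val
    have h3 := strictMono_le_self d.1 d.2 t.val t.2
    simp only [Fin.eta] at h3
    simp only []
    omega

/-- Strictly monotone sequences correspond to subsets. -/
def e4 (n N : ℕ) :
    {d : Fin n → Fin N // StrictMono d} ≃ {s : Finset (Fin N) // s.card = n} where
  toFun d := ⟨Finset.univ.image d.1, by
    rw [Finset.card_image_of_injective _ d.2.injective, Finset.card_univ, Fintype.card_fin]⟩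
  invFun s := ⟨⇑(s.1.orderEmbOfFin s.2), (s.1.orderEmbOfFin s.2).strictMono⟩
  left_inv d := by
    apply Subtype.ext
    exact (Finset.orderEmbOfFin_unique _ (fun x => Finset.mem_image_of_mem _ (mem_univ x))
      d.2).symm
  right_inv s := by
    apply Subtype.ext
    apply Finset.coe_injective
    rw [Finset.coe_image, Finset.coe_univ, Set.image_univ, Finset.range_orderEmbOfFin]

lemma card_fiber {k : ℕ} (σ : Equiv.Perm (Fin i)) :
    Fintype.card {f : Fin i → Fin k // Tuple.sort f = σ} = (k + aB σ i).choose i := by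
  rw [Fintype.card_congr ((e2 σ).trans ((e3 σ).trans (e4 i (k + aB σ i)))),
    Fintype.card_finset_len, Fintype.card_fin]

lemma main (i k : ℕ) :
    k ^ i = ∑ σ : Equiv.Perm (Fin i), (k + aB σ i).choose i := by
  have h1 : k ^ i = Fintype.card (Fin i → Fin k) := by simp
  rw [h1, Fintype.card_congr
    (Equiv.sigmaFiberEquiv (fun f : Fin i → Fin k => Tuple.sort f)).symm,
    Fintype.card_sigma]
  exact Finset.sum_congr rfl fun σ _ => card_fiber σ

lemma isAsc_iff (σ : Equiv.Perm (Fin i)) (x : Fin i) :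
    ((x : ℕ) + 1 < i ∧ σ x < σ ⟨((x : ℕ) + 1) % i, Nat.mod_lt _ x.pos⟩) ↔ IsAsc σ (x : ℕ) := by
  constructor
  · rintro ⟨h1, h2⟩
    refine ⟨h1, ?_⟩
    have hmod : (⟨((x : ℕ) + 1) % i, Nat.mod_lt _ x.pos⟩ : Fin i) = ⟨(x : ℕ) + 1, h1⟩ :=
      Fin.ext (Nat.mod_eq_of_lt h1)
    rw [hmod] at h2
    exact h2
  · rintro ⟨h1, h2⟩
    refine ⟨h1, ?_⟩
    have hmod : (⟨((x : ℕ) + 1) % i, Nat.mod_lt _ x.pos⟩ : Fin i) = ⟨(x : ℕ) + 1, h1⟩ :=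
      Fin.ext (Nat.mod_eq_of_lt h1)
    rw [hmod]
    exact h2

lemma ascCard (σ : Equiv.Perm (Fin i)) :
    (Finset.univ.filter fun x : Fin i =>
      (x : ℕ) + 1 < i ∧ σ x < σ ⟨((x : ℕ) + 1) % i, Nat.mod_lt _ x.pos⟩).card = aB σ i := by
  rw [aB, Finset.card_filter, Finset.card_filter,
    ← Fin.sum_univ_eq_sum_range (fun s => if IsAsc σ s then 1 else 0) i]
  exact Finset.sum_congr rfl fun x _ => if_congr (isAsc_iff σ x) rfl rfl

lemma A_eq (i j : ℕ) :
    A i j = (Finset.univ.filter fun σ : Equiv.Perm (Fin i) => aB σ i = j).card := by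
  rw [A, Fintype.card_subtype]
  congr 1
  apply Finset.filter_congr
  intro σ _
  rw [ascCard]

end Worpitzky

theorem stmt18 (i k : ℕ) :
    k ^ i = ∑ j ∈ Finset.range (i + 1), A i j * (k + j).choose i := by
  rw [Worpitzky.main i k]
  rw [← Finset.sum_fiberwise_of_maps_to' (t := Finset.range (i + 1))
    (g := fun σ : Equiv.Perm (Fin i) => Worpitzky.aB σ i)
    (fun σ _ => Finset.mem_range.2 (by
      show Worpitzky.aB σ i < i + 1
      have := Worpitzky.aB_le σ i; omega))
    (fun j => (k + j).choose i)]
  refine Finset.sum_congr rfl fun j _ => ?_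
  rw [Worpitzky.A_eq, Finset.sum_const, smul_eq_mul]
end
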